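/- Let α be a partial action of a topological group G on a compact space X, given by open sets X_t ⊆ X and homeomorphisms α_t : X_{t⁻¹} → X_t, where the set {(t,x) : x ∈ X_{t⁻¹}} is open in G × X. Then there exists an open subgroup H of G such that X_t = X for all t ∈ H; i.e., the restriction of α to H is a global action. -/

import Mathlib

/-- A continuous partial action of a topological group `G` on a topological space `X`:
open domains `dom t`, partial homeomorphisms `act t : dom t⁻¹ → dom t` (encoded as total
maps that restrict to bijections), openness of the graph set, joint continuity, `dom 1 = X`,
`act 1 = id`, inverses, and the extension property `α_{st} ⊇ α_s ∘ α_t`. -/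
structure TopPartialAction (G : Type*) [Group G] [TopologicalSpace G]
    (X : Type*) [TopologicalSpace X] where
  dom : G → Set X
  act : G → X → X
  dom_open : ∀ t : G, IsOpen (dom t)
  bijOn : ∀ t : G, Set.BijOn (act t) (dom t⁻¹) (dom t)
  graph_open : IsOpen {p : G × X | p.2 ∈ dom p.1⁻¹}
  act_cont : ContinuousOn (fun p : G × X => act p.1 p.2) {p : G × X | p.2 ∈ dom p.1⁻¹}
  dom_one : dom 1 = Set.univ
  act_one : ∀ x : X, act 1 x = x
  inv_eq : ∀ t : G, ∀ x ∈ dom t⁻¹, act t⁻¹ (act t x) = x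
  extend : ∀ s t : G, ∀ x ∈ dom t⁻¹, act t x ∈ dom s⁻¹ →
    x ∈ dom (s * t)⁻¹ ∧ act (s * t) x = act s (act t x)

/-- A partial action of a topological group on a compact space restricts to a global
action on some open subgroup. -/
theorem exists_open_subgroup_restriction_global
    (G : Type*) [Group G] [TopologicalSpace G] [IsTopologicalGroup G]
    (X : Type*) [TopologicalSpace X] [CompactSpace X]
    (α : TopPartialAction G X) :
    ∃ H : Subgroup G, IsOpen (H : Set G) ∧ ∀ t ∈ H, α.dom t = Set.univ := by
  -- closure under products of "full domain" elements
  have aux : ∀ s t : G, α.dom t⁻¹ = Set.univ → α.dom s⁻¹ = Set.univ →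
      α.dom (s * t)⁻¹ = Set.univ := by
    intro s t ht hs
    ext x
    simp only [Set.mem_univ, iff_true]
    exact (α.extend s t x (ht ▸ Set.mem_univ x) (hs ▸ Set.mem_univ _)).1
  -- the candidate subgroup
  refine ⟨{ carrier := {t : G | α.dom t = Set.univ ∧ α.dom t⁻¹ = Set.univ}
            one_mem' := by simp [α.dom_one]
            inv_mem' := by
              rintro t ⟨h1, h2⟩
              exact ⟨h2, by simpa using h1⟩
            mul_mem' := by
              rintro s t ⟨hs1, hs2⟩ ⟨ht1, ht2⟩
              refine ⟨?_, aux s t ht2 hs2⟩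
              have := aux t⁻¹ s⁻¹ (by simpa using hs1) (by simpa using ht1)
              simpa [mul_inv_rev] using this }, ?_, ?_⟩
  · -- openness: tube lemma gives a neighborhood of 1 inside the subgroup
    obtain ⟨u, v, hu, hv, h1u, huv, hsub⟩ :=
      generalized_tube_lemma (isCompact_singleton : IsCompact {(1 : G)}) (isCompact_univ (X := X))
        α.graph_open (by
          rintro ⟨t, x⟩ ⟨ht, -⟩
          simp only [Set.mem_singleton_iff] at ht
          subst ht
          simp [α.dom_one])
    have hu1 : (1 : G) ∈ u := h1u rfl
    have hfull : ∀ t ∈ u, α.dom t⁻¹ = Set.univ := by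
      intro t ht
      ext x
      simp only [Set.mem_univ, iff_true]
      exact hsub (Set.mk_mem_prod ht (huv (Set.mem_univ x)))
    apply Subgroup.isOpen_of_mem_nhds (g := (1 : G))
    have : u ∩ u⁻¹ ∈ nhds (1 : G) :=
      Filter.inter_mem (hu.mem_nhds hu1) ((hu.preimage continuous_inv).mem_nhds (by simpa using hu1))
    refine Filter.mem_of_superset this ?_
    rintro t ⟨htu, htu'⟩
    exact ⟨by simpa using hfull t⁻¹ htu', hfull t htu⟩
  · rintro t ⟨h1, -⟩
    exact h1
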